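/- arXiv:2301.09847 — 5 statements merged into one kernel-verified Lean document; each statement's English description precedes it below -/
import Mathlib

section
/- Let T = (ℝ/ℤ)² be the 2-torus (written additively) and let A, B : T → T be the group automorphisms induced by the integer matrices A = [[0,-1],[1,0]] (of order 4) and B = [[0,-1],[1,1]] (of order 6) acting linearly on ℝ². If K is a compact Hausdorff topological group, f : T → K is a continuous group homomorphism, and u, v ∈ K satisfy u·f(x)·u⁻¹ = f(A x) and v·f(x)·v⁻¹ = f(B x) for all x ∈ T, then f is the trivial homomorphism (f(x) = 1 for all x ∈ T). -/
/-- The 2-torus `(ℝ/ℤ)²`. -/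
abbrev Torus2 : Type := AddCircle (1 : ℝ) × AddCircle (1 : ℝ)

/-- The automorphism of the 2-torus induced by the integer matrix `[[0,-1],[1,0]]`
(of order 4) acting linearly on `ℝ²`. -/
noncomputable def torusAutA (p : Torus2) : Torus2 := (-p.2, p.1)

/-- The automorphism of the 2-torus induced by the integer matrix `[[0,-1],[1,1]]`
(of order 6) acting linearly on `ℝ²`. -/
noncomputable def torusAutB (p : Torus2) : Torus2 := (-p.2, p.1 + p.2)

open Filter Topology

/-- In a compact Hausdorff group, if some sequence of conjugates of `a` tends to `1`,
then `a = 1`. -/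
lemma eq_one_of_conj_tendsto_one' {K : Type*} [Group K] [TopologicalSpace K]
    [IsTopologicalGroup K] [CompactSpace K] [T2Space K] (a : K) (c : ℕ → K)
    (h : Tendsto (fun n => c n * a * (c n)⁻¹) atTop (𝓝 1)) : a = 1 := by
  obtain ⟨k, hk⟩ := exists_clusterPt_of_compactSpace (Filter.map c atTop)
  have hcont : ContinuousAt (fun x : K => x * a * x⁻¹) k := by fun_prop
  have hmap : Tendsto (fun x : K => x * a * x⁻¹) (Filter.map c atTop) (𝓝 1) := by
    rwa [tendsto_map'_iff]
  have hc2 : ClusterPt (k * a * k⁻¹) (𝓝 1) := hk.map hcont hmap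
  have h1 : k * a * k⁻¹ = 1 := eq_of_nhds_neBot hc2
  have := congrArg (fun y => k⁻¹ * y * k) h1
  simpa [mul_assoc] using this

/-- If conjugation by `c` contracts `f` along the line `s ↦ (s, μ s)` by the factor
`lam` with `|lam| < 1`, then `f` vanishes on that line. -/
lemma line_trivial {K : Type*} [Group K] [TopologicalSpace K]
    [IsTopologicalGroup K] [CompactSpace K] [T2Space K]
    (f : Torus2 → K) (hfc : Continuous f) (f0 : f 0 = 1)
    (c : K) (μ lam : ℝ) (hlam : |lam| < 1)
    (hline : ∀ s : ℝ, c * f ((s : AddCircle (1:ℝ)), ((μ * s : ℝ) : AddCircle (1:ℝ))) * c⁻¹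
      = f (((lam * s : ℝ) : AddCircle (1:ℝ)), ((μ * (lam * s) : ℝ) : AddCircle (1:ℝ)))) :
    ∀ s : ℝ, f ((s : AddCircle (1:ℝ)), ((μ * s : ℝ) : AddCircle (1:ℝ))) = 1 := by
  set p : ℝ → Torus2 := fun s => ((s : AddCircle (1:ℝ)), ((μ * s : ℝ) : AddCircle (1:ℝ)))
    with hp
  have hpc : Continuous p := by
    apply Continuous.prodMk
    · exact (AddCircle.continuous_mk' (1:ℝ)).comp continuous_id
    · exact (AddCircle.continuous_mk' (1:ℝ)).comp (continuous_const.mul continuous_id)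
  intro s
  have hn : ∀ n : ℕ, c ^ n * f (p s) * (c ^ n)⁻¹ = f (p (lam ^ n * s)) := by
    intro n
    induction n with
    | zero => simp [hp]
    | succ n ih =>
      have : c ^ (n+1) * f (p s) * (c ^ (n+1))⁻¹
          = c * (c ^ n * f (p s) * (c ^ n)⁻¹) * c⁻¹ := by
        rw [pow_succ']
        group
      rw [this, ih, hline (lam ^ n * s)]
      have h1 : lam * (lam ^ n * s) = lam ^ (n+1) * s := by ring
      rw [h1]
  have hto : Tendsto (fun n : ℕ => lam ^ n * s) atTop (𝓝 0) := by
    have := (tendsto_pow_atTop_nhds_zero_of_abs_lt_one hlam).mul_const s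
    simpa using this
  have hp0 : p 0 = 0 := by simp [hp]
  have htends : Tendsto (fun n : ℕ => f (p (lam ^ n * s))) atTop (𝓝 1) := by
    have := (hfc.comp hpc).continuousAt (x := (0:ℝ)).tendsto.comp hto
    simpa [hp0, f0, Function.comp_def] using this
  apply eq_one_of_conj_tendsto_one' (f (p s)) (fun n => c ^ n)
  simpa only [hn] using htends

/-- If a continuous homomorphism `f` from the 2-torus to a compact group `K` is such that
the automorphisms induced by `[[0,-1],[1,0]]` and `[[0,-1],[1,1]]` are implemented by
conjugation by elements `u, v ∈ K`, then `f` is trivial. -/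
theorem torus_hom_trivial_of_conjugation_implements_SL2
    {K : Type*} [Group K] [TopologicalSpace K] [IsTopologicalGroup K]
    [CompactSpace K] [T2Space K]
    (f : Torus2 → K) (hfc : Continuous f)
    (hf : ∀ x y : Torus2, f (x + y) = f x * f y)
    (u v : K)
    (hu : ∀ x : Torus2, u * f x * u⁻¹ = f (torusAutA x))
    (hv : ∀ x : Torus2, v * f x * v⁻¹ = f (torusAutB x)) :
    ∀ x : Torus2, f x = 1 := by
  -- f 0 = 1
  have f0 : f 0 = 1 := by
    have h0 := hf 0 0
    rw [add_zero] at h0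
    exact mul_eq_left.mp h0.symm
  -- inverse conjugation relations
  have hu' : ∀ x : Torus2, u⁻¹ * f x * u = f (x.2, -x.1) := by
    intro x
    have := hu (x.2, -x.1)
    simp only [torusAutA, neg_neg, Prod.mk.eta] at this
    rw [← this]; group
  have hv' : ∀ x : Torus2, v⁻¹ * f x * v = f (x.1 + x.2, -x.1) := by
    intro x
    have := hv (x.1 + x.2, -x.1)
    simp only [torusAutB, neg_neg] at this
    rw [show (x.1 + x.2 + -x.1 : AddCircle (1:ℝ)) = x.2 by abel,
      Prod.mk.eta] at this
    rw [← this]; group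
  -- the commutator word implements the hyperbolic matrix [[1,1],[1,2]]
  set m : K := u * v⁻¹ * u⁻¹ * v with hm
  have hM : ∀ x : Torus2, m * f x * m⁻¹ = f (x.1 + x.2, x.1 + x.2 + x.2) := by
    intro x
    have s1 : v * f x * v⁻¹ = f (-x.2, x.1 + x.2) := hv x
    have s2 := hu' (-x.2, x.1 + x.2)
    have s3 := hv' (x.1 + x.2, x.2)
    have s4 := hu (x.1 + x.2 + x.2, -(x.1 + x.2))
    simp only at s2 s3 s4
    rw [neg_neg] at s2
    simp only [torusAutA, neg_neg] at s4
    calc m * f x * m⁻¹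
        = u * v⁻¹ * u⁻¹ * (v * f x * v⁻¹) * u * v * u⁻¹ := by rw [hm]; group
      _ = u * v⁻¹ * (u⁻¹ * f (-x.2, x.1 + x.2) * u) * v * u⁻¹ := by rw [s1]; group
      _ = u * (v⁻¹ * f (x.1 + x.2, x.2) * v) * u⁻¹ := by rw [s2]; group
      _ = u * f (x.1 + x.2 + x.2, -(x.1 + x.2)) * u⁻¹ := by rw [s3]
      _ = f (x.1 + x.2, x.1 + x.2 + x.2) := s4
  -- eigenvalue data
  set r : ℝ := Real.sqrt 5 with hrdef
  have hr2 : r ^ 2 = 5 := Real.sq_sqrt (by norm_num)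
  have hr0 : (0:ℝ) < r := Real.sqrt_pos.mpr (by norm_num)
  have hr1 : 1 < r := by nlinarith
  have hr3 : r < 3 := by nlinarith
  set lam : ℝ := (3 - r) / 2 with hlamdef
  have hlam : |lam| < 1 := by
    rw [abs_lt]; constructor <;> [nlinarith; nlinarith]
  set μ₁ : ℝ := (1 - r) / 2 with hμ₁def
  set μ₂ : ℝ := (1 + r) / 2 with hμ₂def
  -- stable line
  have hstable : ∀ s : ℝ, f ((s : AddCircle (1:ℝ)), ((μ₁ * s : ℝ) : AddCircle (1:ℝ))) = 1 := by
    apply line_trivial f hfc f0 m μ₁ lam hlam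
    intro s
    have hthis := hM ((s : AddCircle (1:ℝ)), ((μ₁ * s : ℝ) : AddCircle (1:ℝ)))
    have e1 : s + μ₁ * s = lam * s := by rw [hμ₁def, hlamdef]; ring
    have e2 : s + μ₁ * s + μ₁ * s = μ₁ * (lam * s) := by
      rw [hμ₁def, hlamdef]; linear_combination (-s / 4) * hr2
    have hpt : (((s + μ₁ * s : ℝ) : AddCircle (1:ℝ)),
        ((s + μ₁ * s + μ₁ * s : ℝ) : AddCircle (1:ℝ)))
        = (((lam * s : ℝ) : AddCircle (1:ℝ)), ((μ₁ * (lam * s) : ℝ) : AddCircle (1:ℝ))) := by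
      rw [e2, e1]
    rw [hthis]
    exact congrArg f hpt
  -- unstable line
  have hunstable : ∀ s : ℝ, f ((s : AddCircle (1:ℝ)), ((μ₂ * s : ℝ) : AddCircle (1:ℝ))) = 1 := by
    apply line_trivial f hfc f0 m⁻¹ μ₂ lam hlam
    intro s
    have hthis := hM (((lam * s : ℝ) : AddCircle (1:ℝ)), ((μ₂ * (lam * s) : ℝ) : AddCircle (1:ℝ)))
    have e1 : lam * s + μ₂ * (lam * s) = s := by
      rw [hμ₂def, hlamdef]; linear_combination (-s / 4) * hr2
    have e2 : lam * s + μ₂ * (lam * s) + μ₂ * (lam * s) = μ₂ * s := by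
      rw [hμ₂def, hlamdef]; linear_combination (-s / 2) * hr2
    have hpt : (((lam * s + μ₂ * (lam * s) : ℝ) : AddCircle (1:ℝ)),
        ((lam * s + μ₂ * (lam * s) + μ₂ * (lam * s) : ℝ) : AddCircle (1:ℝ)))
        = (((s : ℝ) : AddCircle (1:ℝ)), ((μ₂ * s : ℝ) : AddCircle (1:ℝ))) := by
      rw [e2, e1]
    have key : m * f (((lam * s : ℝ) : AddCircle (1:ℝ)),
        ((μ₂ * (lam * s) : ℝ) : AddCircle (1:ℝ))) * m⁻¹
        = f (((s : ℝ) : AddCircle (1:ℝ)), ((μ₂ * s : ℝ) : AddCircle (1:ℝ))) := by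
      rw [hthis]
      exact congrArg f hpt
    rw [← key]; group
  -- decompose an arbitrary point along the two eigenlines
  intro x
  obtain ⟨x1, x2⟩ := x
  obtain ⟨a, rfl⟩ := QuotientAddGroup.mk_surjective x1
  obtain ⟨b, rfl⟩ := QuotientAddGroup.mk_surjective x2
  set s' : ℝ := (b - μ₁ * a) / r with hs'def
  set s : ℝ := a - s' with hsdef
  have hsum : ((a : AddCircle (1:ℝ)), (b : AddCircle (1:ℝ)))
      = (((s : ℝ) : AddCircle (1:ℝ)), ((μ₁ * s : ℝ) : AddCircle (1:ℝ)))
        + (((s' : ℝ) : AddCircle (1:ℝ)), ((μ₂ * s' : ℝ) : AddCircle (1:ℝ))) := by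
    have h1 : a = s + s' := by rw [hsdef]; ring
    have hrne : r ≠ 0 := ne_of_gt hr0
    have h2 : b = μ₁ * s + μ₂ * s' := by
      rw [hsdef, hs'def, hμ₁def, hμ₂def]
      field_simp
      ring
    rw [Prod.mk_add_mk, ← AddCircle.coe_add, ← AddCircle.coe_add, ← h1, ← h2]
  rw [hsum, hf, hstable s, hunstable s', one_mul]
end

section
/- Let C be a category with pushouts in which every monomorphism is regular (i.e., is an equalizer of some pair of morphisms). Let ι₀ : H → G₀ and ι₁ : H → G₁ be monomorphisms such that there exist monomorphisms j₀ : G₀ → G and j₁ : G₁ → G with j₀ ∘ ι₀ = j₁ ∘ ι₁. Then the pushout square of ι₀ and ι₁ (with vertex G₀ ∐_H G₁ and its two structure maps) is also a pullback square. -/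
open CategoryTheory CategoryTheory.Limits

/-- In a category with pushouts in which every monomorphism is regular, the pushout square
of a coherently-embeddable pair of monomorphisms is also a pullback square. -/
theorem pushout_isPullback_of_coherently_embeddable
    {C : Type*} [Category C] [HasPushouts C] [IsRegularMonoCategory C]
    {H G₀ G₁ G : C} (ι₀ : H ⟶ G₀) (ι₁ : H ⟶ G₁) [Mono ι₀] [Mono ι₁]
    (j₀ : G₀ ⟶ G) (j₁ : G₁ ⟶ G) [Mono j₀] [Mono j₁]
    (hcomm : ι₀ ≫ j₀ = ι₁ ≫ j₁) :
    IsPullback ι₀ ι₁ (pushout.inl ι₀ ι₁) (pushout.inr ι₀ ι₁) := by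
  -- `ι₀ ≫ j₀ : H ⟶ G` is a mono, hence a regular mono.
  haveI hm : Mono (ι₀ ≫ j₀) := mono_comp ι₀ j₀
  obtain ⟨Z, u, v, huv, hlim⟩ := regularMonoOfMono (ι₀ ≫ j₀)
  -- cokernel pair of `ι₀ ≫ j₀`
  have hww : (ι₀ ≫ j₀) ≫ pushout.inl (ι₀ ≫ j₀) (ι₀ ≫ j₀)
      = (ι₀ ≫ j₀) ≫ pushout.inr (ι₀ ≫ j₀) (ι₀ ≫ j₀) := pushout.condition
  set w₁ : G ⟶ pushout (ι₀ ≫ j₀) (ι₀ ≫ j₀) := pushout.inl (ι₀ ≫ j₀) (ι₀ ≫ j₀) with hw₁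
  set w₂ : G ⟶ pushout (ι₀ ≫ j₀) (ι₀ ≫ j₀) := pushout.inr (ι₀ ≫ j₀) (ι₀ ≫ j₀) with hw₂
  -- `r` collapses the cokernel pair onto the equalizing pair `(u, v)`
  let r : pushout (ι₀ ≫ j₀) (ι₀ ≫ j₀) ⟶ Z := pushout.desc u v huv
  have hr₁ : w₁ ≫ r = u := pushout.inl_desc _ _ _
  have hr₂ : w₂ ≫ r = v := pushout.inr_desc _ _ _
  -- two maps out of the pushout `G₀ ∐_H G₁`
  have hφc : ι₀ ≫ (j₀ ≫ w₁) = ι₁ ≫ (j₁ ≫ w₁) := by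
    simpa only [Category.assoc] using hcomm =≫ w₁
  have hψc : ι₀ ≫ (j₀ ≫ w₂) = ι₁ ≫ (j₁ ≫ w₁) := by
    have hww' : ι₀ ≫ j₀ ≫ w₁ = ι₀ ≫ j₀ ≫ w₂ := by
      simpa only [Category.assoc] using hww
    exact hww'.symm.trans hφc
  have key : ∀ s : PullbackCone (pushout.inl ι₀ ι₁) (pushout.inr ι₀ ι₁),
      { l : s.pt ⟶ H // l ≫ ι₀ = s.fst ∧ l ≫ ι₁ = s.snd } := by
    intro s
    have h₁ : s.fst ≫ j₀ ≫ w₁ = s.snd ≫ j₁ ≫ w₁ := by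
      have := s.condition =≫ pushout.desc (j₀ ≫ w₁) (j₁ ≫ w₁) hφc
      rw [Category.assoc, Category.assoc] at this
      have e1 := pushout.inl_desc (j₀ ≫ w₁) (j₁ ≫ w₁) hφc
      have e2 := pushout.inr_desc (j₀ ≫ w₁) (j₁ ≫ w₁) hφc
      rw [e1, e2] at this
      exact this
    have h₂ : s.fst ≫ j₀ ≫ w₂ = s.snd ≫ j₁ ≫ w₁ := by
      have := s.condition =≫ pushout.desc (j₀ ≫ w₂) (j₁ ≫ w₁) hψc
      rw [Category.assoc, Category.assoc] at this
      have e1 := pushout.inl_desc (j₀ ≫ w₂) (j₁ ≫ w₁) hψc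
      have e2 := pushout.inr_desc (j₀ ≫ w₂) (j₁ ≫ w₁) hψc
      rw [e1, e2] at this
      exact this
    have heq : (s.fst ≫ j₀) ≫ u = (s.fst ≫ j₀) ≫ v := by
      have h₁' := h₁ =≫ r
      have h₂' := h₂ =≫ r
      simp only [Category.assoc] at h₁' h₂'
      simp only [Category.assoc, hr₁, hr₂] at *
      exact h₁'.trans h₂'.symm
    obtain ⟨l, hl⟩ := Fork.IsLimit.lift' hlim (s.fst ≫ j₀) heq
    simp only [Fork.ι_ofι] at hl
    have hsnd : s.fst ≫ j₀ = s.snd ≫ j₁ := by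
      have := s.condition =≫ pushout.desc j₀ j₁ hcomm
      rw [Category.assoc, Category.assoc] at this
      have e1 := pushout.inl_desc j₀ j₁ hcomm
      have e2 := pushout.inr_desc j₀ j₁ hcomm
      rw [e1, e2] at this
      exact this
    refine ⟨l, ?_, ?_⟩
    · rw [← cancel_mono j₀, Category.assoc]
      exact hl
    · rw [← cancel_mono j₁, Category.assoc, ← hcomm, hl, hsnd]
  apply IsPullback.of_isLimit' ⟨pushout.condition⟩
  exact PullbackCone.IsLimit.mk pushout.condition (fun s => (key s).1)
    (fun s => (key s).2.1) (fun s => (key s).2.2)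
    (fun s t ht₀ _ => by rw [← cancel_mono ι₀, ht₀, (key s).2.1])
end

section
/- Every algebraically sound family of embeddings ι_i : H → G_i (i ∈ I) of compact groups is coherently embeddable: there exist a compact group G and injective continuous homomorphisms j_i : G_i → G with all composites j_i ∘ ι_i equal. -/
universe u v w

/-- A bundled compact (Hausdorff) topological group. -/
structure CompactGroup : Type (u + 1) where
  carrier : Type u
  [grp : Group carrier]
  [top : TopologicalSpace carrier]
  [tgrp : IsTopologicalGroup carrier]
  [cpt : CompactSpace carrier]
  [t2 : T2Space carrier]

attribute [instance] CompactGroup.grp CompactGroup.top CompactGroup.tgrp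
  CompactGroup.cpt CompactGroup.t2

instance : CoeSort CompactGroup.{u} (Type u) := ⟨CompactGroup.carrier⟩

/-- A family of embeddings `φ i : H → G i` of compact groups is *algebraically sound* if the
group-theoretic amalgamated free product `∐_H G i` (Mathlib's `Monoid.PushoutI`) embeds into
its Bohr compactification: every `x ≠ 1` in `∐_H G i` is sent to a non-identity element by
the homomorphism induced by some family of continuous homomorphisms `f i : G i → K` into a
compact group `K`, all agreeing on `H`. -/
def AlgebraicallySound {ι : Type u} {H : Type v} [Group H] [TopologicalSpace H]
    {G : ι → Type w} [∀ i, Group (G i)] [∀ i, TopologicalSpace (G i)]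
    (φ : ∀ i, H →* G i) : Prop :=
  ∀ x : Monoid.PushoutI φ, x ≠ 1 →
    ∃ (K : CompactGroup.{max u v w}) (f : ∀ i, G i →* K) (k : H →* K)
      (hf : ∀ i, (f i).comp (φ i) = k),
      (∀ i, Continuous (f i)) ∧ Monoid.PushoutI.lift f k hf x ≠ 1

/-- A family of embeddings `φ i : H → G i` of compact groups is *coherently embeddable* if
there are injective continuous homomorphisms `j i : G i → K` into a single compact group `K`
whose composites with the `φ i` all agree. -/
def CoherentlyEmbeddable {ι : Type u} {H : Type v} [Group H] [TopologicalSpace H]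
    {G : ι → Type w} [∀ i, Group (G i)] [∀ i, TopologicalSpace (G i)]
    (φ : ∀ i, H →* G i) : Prop :=
  ∃ (K : CompactGroup.{max u v w}) (j : ∀ i, G i →* K) (k : H →* K),
    (∀ i, Continuous (j i)) ∧ (∀ i, Function.Injective (j i)) ∧
    ∀ i, (j i).comp (φ i) = k

/-- An algebraically sound family of embeddings of compact groups is coherently embeddable. -/
theorem coherentlyEmbeddable_of_algebraicallySound
    {ι : Type u} {H : Type v}
    [Group H] [TopologicalSpace H] [IsTopologicalGroup H] [CompactSpace H] [T2Space H]
    {G : ι → Type w} [∀ i, Group (G i)] [∀ i, TopologicalSpace (G i)]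
    [∀ i, IsTopologicalGroup (G i)] [∀ i, CompactSpace (G i)] [∀ i, T2Space (G i)]
    (φ : ∀ i, H →* G i)
    (hinj : ∀ i, Function.Injective (φ i)) (hcont : ∀ i, Continuous (φ i))
    (hsound : AlgebraicallySound φ) :
    CoherentlyEmbeddable φ := by
  classical
  set S := {x : Monoid.PushoutI φ // x ≠ 1} with hS
  choose K f k hf hc hne using fun x : S => hsound x.1 x.2
  refine ⟨⟨∀ x : S, (K x).carrier⟩,
    fun i => Pi.monoidHom (fun x => f x i), Pi.monoidHom (fun x => k x),
    fun i => continuous_pi fun x => hc x i, ?_, ?_⟩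
  · intro i
    rw [injective_iff_map_eq_one]
    intro a ha
    by_contra ha1
    have hxne : Monoid.PushoutI.of (φ := φ) i a ≠ 1 :=
      fun h => ha1 (Monoid.PushoutI.of_injective hinj i (by simpa using h))
    set x : S := ⟨Monoid.PushoutI.of i a, hxne⟩
    have h1 : f x i a ≠ 1 := by
      have := hne x
      rwa [show x.1 = Monoid.PushoutI.of i a from rfl, Monoid.PushoutI.lift_of] at this
    exact h1 (congrFun ha x)
  · intro i
    ext h x
    exact DFunLike.congr_fun (hf x i) h
end

section
/- Let ι_i : H → G_i (i ∈ I) be an algebraically sound family of embeddings of compact groups. Then for every subset J ⊆ I, the subfamily ι_j : H → G_j (j ∈ J) is also algebraically sound. -/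
universe u v w

open Monoid Monoid.PushoutI

theorem pushoutI_subfamily_map_ne_one
    {ι : Type u} {H : Type v} [Group H]
    {G : ι → Type w} [∀ i, Group (G i)]
    (φ : ∀ i, H →* G i) (hinj : ∀ i, Function.Injective (φ i)) (J : Set ι)
    (x : Monoid.PushoutI (fun j : J => φ j)) (hx : x ≠ 1) :
    Monoid.PushoutI.lift (fun j : J => Monoid.PushoutI.of (φ := φ) j.1)
      (Monoid.PushoutI.base φ) (fun j => Monoid.PushoutI.of_comp_eq_base j.1) x ≠ 1 := by
  classical
  set ψ : Monoid.PushoutI (fun j : J => φ j) →* Monoid.PushoutI φ :=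
    Monoid.PushoutI.lift (fun j : J => Monoid.PushoutI.of (φ := φ) j.1)
      (Monoid.PushoutI.base φ) (fun j => Monoid.PushoutI.of_comp_eq_base j.1) with hψ
  show ψ x ≠ 1
  obtain ⟨d⟩ := NormalWord.transversal_nonempty (fun j : J => φ j) (fun j => hinj j)
  set w : NormalWord d := NormalWord.equiv x with hwdef
  have hxw : w.prod = x := NormalWord.equiv.symm_apply_apply x
  -- the mapped word over the full family
  have hchain : (w.toList.map (fun l : Σ j : J, G j => (⟨l.1.1, l.2⟩ : Σ i, G i))).Chain'
      fun l l' => Sigma.fst l ≠ Sigma.fst l' := by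
    show List.IsChain _ _
    rw [List.isChain_map]
    refine w.toWord.chain_ne.imp ?_
    intro a b hab h
    exact hab (Subtype.ext h)
  set W' : Monoid.CoprodI.Word G :=
    { toList := w.toList.map (fun l : Σ j : J, G j => (⟨l.1.1, l.2⟩ : Σ i, G i))
      ne_one := by
        intro l' hl'
        obtain ⟨l, hl, rfl⟩ := List.mem_map.1 hl'
        exact w.toWord.ne_one l hl
      chain_ne := hchain } with hW'
  have hred : Monoid.PushoutI.Reduced φ W' := by
    intro g hg
    obtain ⟨l, hl, rfl⟩ := List.mem_map.1 hg
    rintro ⟨y, hy⟩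
    have hset : l.2 ∈ d.set l.1 := w.normalized l.1 l.2 (by exact hl)
    have hrange : l.2 ∈ ((fun j : J => φ j) l.1).range := ⟨y, hy⟩
    have hinj2 := (d.compl l.1).injective
      (a₁ := (⟨⟨l.2, hrange⟩, ⟨1, d.one_mem l.1⟩⟩ :
        (((fun j : J => φ j) l.1).range : Set (G l.1.1)) × d.set l.1))
      (a₂ := (⟨⟨1, one_mem _⟩, ⟨l.2, hset⟩⟩ :
        (((fun j : J => φ j) l.1).range : Set (G l.1.1)) × d.set l.1))
      (by simp)
    have hl2 : l.2 = 1 := by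
      have := congrArg (fun p => ((p.1 : G l.1.1))) hinj2
      simpa using this
    exact w.toWord.ne_one l hl hl2
  have hprod : ψ (Monoid.PushoutI.ofCoprodI w.toWord.prod)
      = Monoid.PushoutI.ofCoprodI (Monoid.CoprodI.Word.prod W') := by
    simp only [Monoid.CoprodI.Word.prod, map_list_prod, List.map_map, hW']
    refine congrArg List.prod (List.map_congr_left ?_)
    intro l _
    simp [hψ, Function.comp_def]
  intro h1
  have hx1 : ψ x = Monoid.PushoutI.base φ w.head
      * Monoid.PushoutI.ofCoprodI (Monoid.CoprodI.Word.prod W') := by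
    rw [← hxw]
    show ψ (Monoid.PushoutI.base _ w.head * Monoid.PushoutI.ofCoprodI w.toWord.prod) = _
    rw [map_mul, hprod, hψ]
    simp
  rw [hx1] at h1
  have hmem : Monoid.PushoutI.ofCoprodI (Monoid.CoprodI.Word.prod W')
      ∈ (Monoid.PushoutI.base φ).range :=
    ⟨w.head⁻¹, by rw [map_inv]; exact inv_eq_of_mul_eq_one_right h1⟩
  have hempty := hred.eq_empty_of_mem_range hinj hmem
  have hnil : w.toList = [] := by
    have h2 : W'.toList = [] := by rw [hempty]; rfl
    rw [hW'] at h2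
    exact List.map_eq_nil_iff.1 h2
  have hWprod : w.toWord.prod = 1 := by
    simp [Monoid.CoprodI.Word.prod, hnil]
  have hxbase : x = Monoid.PushoutI.base (fun j : J => φ j) w.head := by
    rw [← hxw]
    show Monoid.PushoutI.base _ w.head * Monoid.PushoutI.ofCoprodI w.toWord.prod = _
    rw [hWprod]; simp
  have hhead : w.head = 1 := by
    apply Monoid.PushoutI.base_injective hinj
    rw [map_one]
    have h3 : Monoid.PushoutI.ofCoprodI (φ := φ) (Monoid.CoprodI.Word.prod W') = 1 := by
      rw [hempty, Monoid.CoprodI.Word.prod_empty, map_one]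
    rw [h3, mul_one] at h1
    exact h1
  exact hx (by rw [hxbase, hhead, map_one])

/-- Every subfamily of an algebraically sound family of embeddings of compact groups is
algebraically sound. -/
theorem algebraicallySound_subfamily
    {ι : Type u} {H : Type v}
    [Group H] [TopologicalSpace H] [IsTopologicalGroup H] [CompactSpace H] [T2Space H]
    {G : ι → Type w} [∀ i, Group (G i)] [∀ i, TopologicalSpace (G i)]
    [∀ i, IsTopologicalGroup (G i)] [∀ i, CompactSpace (G i)] [∀ i, T2Space (G i)]
    (φ : ∀ i, H →* G i)
    (hinj : ∀ i, Function.Injective (φ i)) (hcont : ∀ i, Continuous (φ i))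
    (hsound : AlgebraicallySound φ)
    (J : Set ι) :
    AlgebraicallySound (fun j : J => φ j) := by
  intro x hx
  have hne1 := pushoutI_subfamily_map_ne_one φ hinj J x hx
  obtain ⟨K, f, k, hf, hcontf, hne⟩ := hsound _ hne1
  refine ⟨K, fun j => f j, k, fun j => hf j, fun j => hcontf j, ?_⟩
  have hcomp : (Monoid.PushoutI.lift f k hf).comp
        (Monoid.PushoutI.lift (fun j : J => Monoid.PushoutI.of (φ := φ) j.1)
          (Monoid.PushoutI.base φ) (fun j => Monoid.PushoutI.of_comp_eq_base j.1))
      = Monoid.PushoutI.lift (fun j : J => f j) k (fun j => hf j) := by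
    refine Monoid.PushoutI.hom_ext (fun j => ?_) ?_ <;> ext g <;>
      simp [Monoid.PushoutI.lift_of, Monoid.PushoutI.lift_base]
  have hx2 := DFunLike.congr_fun hcomp x
  simp only [MonoidHom.comp_apply] at hx2
  rw [← hx2]
  exact hne
end

section
/- Let ι_i : H → G_i (i ∈ I) be a family of embeddings of compact groups, and let D be a collection of subsets of I that is directed under inclusion and covers I (so every finite subset of I is contained in some J ∈ D). Suppose that: (i) for each J ∈ D the subfamily (ι_j)_{j∈J} is algebraically sound; and (ii) for each J ∈ D there exist a function r : I → J with r(j) = j for all j ∈ J and continuous homomorphisms t_i : G_i → G_{r(i)} with t_i ∘ ι_i = ι_{r(i)} for all i ∈ I and t_j = id_{G_j} for all j ∈ J (so that the induced homomorphism ∐_{H,I} G_i → ∐_{H,J} G_j splits the canonical map ∐_{H,J} G_j → ∐_{H,I} G_i). Then the whole family (ι_i)_{i∈I} is algebraically sound. -/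
universe u v w

section Aux

variable {ι : Type u} {H : Type v} [Group H] {G : ι → Type w} [∀ i, Group (G i)]

/-- The canonical map from the pushout over a subfamily to the pushout over the whole family. -/
def psiAux (φ : ∀ i, H →* G i) (J : Set ι) :
    Monoid.PushoutI (fun j : J => φ j) →* Monoid.PushoutI φ :=
  Monoid.PushoutI.lift (fun j => Monoid.PushoutI.of j.1) (Monoid.PushoutI.base φ)
    (fun j => Monoid.PushoutI.of_comp_eq_base j.1)

theorem psiAux_range_mono (φ : ∀ i, H →* G i) {J₁ J₂ : Set ι} (h : J₁ ⊆ J₂) :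
    Set.range (psiAux φ J₁) ⊆ Set.range (psiAux φ J₂) := by
  let inclF : ∀ j : J₁, G j.1 →* Monoid.PushoutI (fun j : J₂ => φ j.1) :=
    fun j => Monoid.PushoutI.of (φ := fun j : J₂ => φ j.1) ⟨j.1, h j.2⟩
  let incl : Monoid.PushoutI (fun j : J₁ => φ j) →* Monoid.PushoutI (fun j : J₂ => φ j) :=
    Monoid.PushoutI.lift inclF (Monoid.PushoutI.base _)
      (fun j => Monoid.PushoutI.of_comp_eq_base (φ := fun j : J₂ => φ j.1) ⟨j.1, h j.2⟩)
  have hcomp : (psiAux φ J₂).comp incl = psiAux φ J₁ := by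
    apply Monoid.PushoutI.hom_ext
    · intro j
      ext g
      simp [incl, inclF, psiAux]
    · ext g
      simp [incl, inclF, psiAux]
  rintro _ ⟨y, rfl⟩
  exact ⟨incl y, by rw [← hcomp]; rfl⟩

theorem exists_mem_range_psiAux (φ : ∀ i, H →* G i) (D : Set (Set ι))
    (hdir : ∀ J₁ ∈ D, ∀ J₂ ∈ D, ∃ J ∈ D, J₁ ⊆ J ∧ J₂ ⊆ J)
    (hcover : ∀ s : Finset ι, ∃ J ∈ D, ↑s ⊆ J) (x : Monoid.PushoutI φ) :
    ∃ J ∈ D, x ∈ Set.range (psiAux φ J) := by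
  induction x using Monoid.PushoutI.induction_on with
  | of i g =>
    obtain ⟨J, hJ, hiJ⟩ := hcover {i}
    have hi : i ∈ J := hiJ (by simp)
    exact ⟨J, hJ, Monoid.PushoutI.of (φ := fun j : J => φ j) ⟨i, hi⟩ g, by
      simp [psiAux]⟩
  | base h =>
    obtain ⟨J, hJ, -⟩ := hcover ∅
    exact ⟨J, hJ, Monoid.PushoutI.base _ h, by simp [psiAux]⟩
  | mul x y hx hy =>
    obtain ⟨J₁, hJ₁, hx⟩ := hx
    obtain ⟨J₂, hJ₂, hy⟩ := hy
    obtain ⟨J, hJ, h₁, h₂⟩ := hdir J₁ hJ₁ J₂ hJ₂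
    obtain ⟨a, ha⟩ := psiAux_range_mono φ h₁ hx
    obtain ⟨b, hb⟩ := psiAux_range_mono φ h₂ hy
    exact ⟨J, hJ, a * b, by rw [map_mul, ha, hb]⟩

theorem comp_heq_aux {K : Type*} [Monoid K] {ι' : Type*} {G' : ι' → Type*}
    [∀ i, Monoid (G' i)] (f : ∀ i, G' i →* K) {a b : ι'} (h : a = b)
    (t : G' b →* G' a) (ht : HEq t (MonoidHom.id (G' b))) : (f a).comp t = f b := by
  subst h
  rw [eq_of_heq ht, MonoidHom.comp_id]

end Aux

/-- If a family of embeddings of compact groups is the filtered union of algebraically sound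
subfamilies, and for each such subfamily `J` the canonical map of group-theoretic amalgamated
free products `∐_{H,J} G j → ∐_{H,I} G i` splits (via a retraction `r : I → J` fixing `J` and
compatible continuous homomorphisms `t i : G i → G (r i)` over `H` restricting to the identity
on the members of `J`), then the whole family is algebraically sound. -/
theorem algebraicallySound_of_directed_union_of_split_sound_subfamilies
    {ι : Type u} {H : Type v}
    [Group H] [TopologicalSpace H] [IsTopologicalGroup H] [CompactSpace H] [T2Space H]
    {G : ι → Type w} [∀ i, Group (G i)] [∀ i, TopologicalSpace (G i)]
    [∀ i, IsTopologicalGroup (G i)] [∀ i, CompactSpace (G i)] [∀ i, T2Space (G i)]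
    (φ : ∀ i, H →* G i)
    (hinj : ∀ i, Function.Injective (φ i)) (hcont : ∀ i, Continuous (φ i))
    (D : Set (Set ι))
    (hdir : ∀ J₁ ∈ D, ∀ J₂ ∈ D, ∃ J ∈ D, J₁ ⊆ J ∧ J₂ ⊆ J)
    (hcover : ∀ s : Finset ι, ∃ J ∈ D, ↑s ⊆ J)
    (hsound : ∀ J ∈ D, AlgebraicallySound (fun j : J => φ j))
    (hsplit : ∀ J ∈ D, ∃ r : ι → ι,
      (∀ i, r i ∈ J) ∧ (∀ j ∈ J, r j = j) ∧
      ∃ t : ∀ i, G i →* G (r i),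
        (∀ i, Continuous (t i)) ∧
        (∀ i, (t i).comp (φ i) = φ (r i)) ∧
        ∀ j ∈ J, HEq (t j) (MonoidHom.id (G j))) :
    AlgebraicallySound φ := by
  intro x hx
  obtain ⟨J, hJ, y, rfl⟩ := exists_mem_range_psiAux φ D hdir hcover x
  have hy : y ≠ 1 := by
    rintro rfl
    exact hx (map_one _)
  obtain ⟨K, f, k, hf, hcontf, hne⟩ := hsound J hJ y hy
  obtain ⟨r, hr1, hr2, t, htc, htφ, htid⟩ := hsplit J hJ
  refine ⟨K, fun i => (f ⟨r i, hr1 i⟩).comp (t i), k, ?_, ?_, ?_⟩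
  · intro i
    rw [MonoidHom.comp_assoc, htφ i]
    exact hf ⟨r i, hr1 i⟩
  · exact fun i => (hcontf _).comp (htc i)
  · have hcomp : (Monoid.PushoutI.lift (fun i => (f ⟨r i, hr1 i⟩).comp (t i)) k
        (by intro i; rw [MonoidHom.comp_assoc, htφ i]; exact hf ⟨r i, hr1 i⟩)).comp
        (psiAux φ J) = Monoid.PushoutI.lift f k hf := by
      apply Monoid.PushoutI.hom_ext
      · intro j
        ext g
        simp only [MonoidHom.comp_apply, psiAux, Monoid.PushoutI.lift_of]
        have : ((f ⟨r j.1, hr1 j.1⟩).comp (t j.1)) g = f j g := by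
          rw [comp_heq_aux (G' := fun j : J => G j.1) f
            (Subtype.ext (hr2 j.1 j.2) : (⟨r j.1, hr1 j.1⟩ : J) = j) (t j.1)
            (htid j.1 j.2)]
        exact this
      · ext g
        simp [psiAux]
    intro h1
    exact hne ((DFunLike.congr_fun hcomp y).symm.trans h1)
end
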